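/- For nonneg integers m and j with j ≤ m, the alternating sum over ℓ from j to 2m+1 of (−1)^ℓ · C(2m+1, ℓ) · Stirling1unsigned(ℓ, ℓ−j) equals 0. -/

import Mathlib

open Finset

/-- Unsigned Stirling numbers of the first kind: number of permutations of `n`
elements with exactly `k` cycles. -/
def stirling1 : ℕ → ℕ → ℕ
  | 0, 0 => 1
  | 0, _ + 1 => 0
  | _ + 1, 0 => 0
  | n + 1, k + 1 => n * stirling1 n (k + 1) + stirling1 n k

lemma stirling1_gt : ∀ n k : ℕ, n < k → stirling1 n k = 0
  | 0, k+1, _ => rfl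
  | n+1, k+1, h => by
      show n * stirling1 n (k + 1) + stirling1 n k = 0
      rw [stirling1_gt n (k+1) (by omega), stirling1_gt n k (by omega)]
      ring

lemma stirling1_self : ∀ n : ℕ, stirling1 n n = 1
  | 0 => rfl
  | n+1 => by
      show n * stirling1 n (n + 1) + stirling1 n n = 1
      rw [stirling1_gt n (n+1) (by omega), stirling1_self n]
      ring

/-- polynomial-corrected stirling -/
def s (j ℓ : ℕ) : ℤ := if j ≤ ℓ then (stirling1 ℓ (ℓ - j) : ℤ) else 0

lemma s_zero (ℓ : ℕ) : s 0 ℓ = 1 := by simp [s, stirling1_self]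

lemma s_succ (k ℓ : ℕ) : s (k+1) (ℓ+1) = (ℓ : ℤ) * s k ℓ + s (k+1) ℓ := by
  rcases le_or_gt (k+1) ℓ with h | h
  · have h1 : k ≤ ℓ := by omega
    simp only [s, if_pos (by omega : k+1 ≤ ℓ+1), if_pos h1, if_pos h]
    have e1 : ℓ + 1 - (k + 1) = (ℓ - (k+1)) + 1 := by omega
    have e2 : ℓ - k = ℓ - (k+1) + 1 := by omega
    rw [e1, e2]
    show ((ℓ * stirling1 ℓ (ℓ - (k+1) + 1) + stirling1 ℓ (ℓ - (k+1)) : ℕ) : ℤ) = _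
    push_cast
    ring
  · rcases Nat.lt_or_ge ℓ k with h2 | h2
    · simp only [s, if_neg (by omega : ¬ k+1 ≤ ℓ+1), if_neg (by omega : ¬ k ≤ ℓ),
        if_neg (by omega : ¬ k+1 ≤ ℓ)]
      ring
    · have hk : k = ℓ := by omega
      subst hk
      simp only [s, if_pos (le_refl (k+1)), if_pos (le_refl k),
        if_neg (by omega : ¬ k+1 ≤ k), Nat.sub_self]
      rw [show stirling1 (k+1) 0 = 0 from rfl]
      cases k with
      | zero => simp
      | succ k' => rw [show stirling1 (k'+1) 0 = 0 from rfl]; simp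

def PolyDeg : ℕ → (ℕ → ℤ) → Prop
  | 0, f => ∀ x, f x = f 0
  | d+1, f => PolyDeg d (fun x => f (x+1) - f x)

lemma polydeg_congr : ∀ (d : ℕ) (f g : ℕ → ℤ), (∀ x, f x = g x) → PolyDeg d f → PolyDeg d g
  | 0, f, g, h, hf => fun x => by rw [← h x, ← h 0]; exact hf x
  | d+1, f, g, h, hf =>
      polydeg_congr d _ _ (fun x => by rw [h x, h (x+1)]) hf

lemma polydeg_const : ∀ (d : ℕ) (c : ℤ), PolyDeg d (fun _ => c)
  | 0, c => fun x => rfl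
  | d+1, c => polydeg_congr d (fun _ => (0:ℤ)) _ (fun x => by ring) (polydeg_const d 0)

lemma polydeg_mono : ∀ (d : ℕ) (f : ℕ → ℤ), PolyDeg d f → PolyDeg (d+1) f
  | 0, f, hf => fun x => by simp [hf x, hf (x+1), hf 1]
  | d+1, f, hf => polydeg_mono d _ hf

lemma polydeg_add : ∀ (d : ℕ) (f g : ℕ → ℤ), PolyDeg d f → PolyDeg d g →
    PolyDeg d (fun x => f x + g x)
  | 0, f, g, hf, hg => fun x => by simp only [hf x, hg x]
  | d+1, f, g, hf, hg =>
      polydeg_congr d _ _ (fun x => by ring) (polydeg_add d _ _ hf hg)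

lemma polydeg_neg : ∀ (d : ℕ) (f : ℕ → ℤ), PolyDeg d f → PolyDeg d (fun x => -(f x))
  | 0, f, hf => fun x => by simp only [hf x]
  | d+1, f, hf => polydeg_congr d _ _ (fun x => by ring) (polydeg_neg d _ hf)

lemma polydeg_shift : ∀ (d : ℕ) (f : ℕ → ℤ), PolyDeg d f → PolyDeg d (fun x => f (x+1))
  | 0, f, hf => fun x => by simp [hf (x+1), hf 1]
  | d+1, f, hf => polydeg_shift d _ hf

lemma polydeg_mul_id : ∀ (d : ℕ) (f : ℕ → ℤ), PolyDeg d f →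
    PolyDeg (d+1) (fun x => (x : ℤ) * f x)
  | 0, f, hf => by
      show PolyDeg 0 _
      intro x
      simp only [hf x, hf (x+1), hf 1]
      push_cast
      ring
  | d+1, f, hf => by
      have h1 : PolyDeg (d+1) (fun x => (x:ℤ) * (f (x+1) - f x)) :=
        polydeg_mul_id d _ hf
      have h2 : PolyDeg (d+1) (fun x => f (x+1)) := polydeg_shift (d+1) f hf
      exact polydeg_congr (d+1) _
        (fun x => ((x+1 : ℕ) : ℤ) * f (x+1) - (x : ℤ) * f x)
        (fun x => by push_cast; ring) (polydeg_add (d+1) _ _ h1 h2)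

lemma diff_sum (n : ℕ) (F : ℕ → ℤ) :
    ∑ ℓ ∈ Finset.range (n+1+1), (-1:ℤ)^ℓ * ((n+1).choose ℓ : ℤ) * F ℓ
      = ∑ ℓ ∈ Finset.range (n+1), (-1:ℤ)^ℓ * (n.choose ℓ : ℤ) * (F ℓ - F (ℓ+1)) := by
  have key : ∀ i : ℕ, (-1:ℤ)^(i+1) * ((n+1).choose (i+1) : ℤ) * F (i+1)
      = -((-1:ℤ)^i * (n.choose i : ℤ) * F (i+1))
        - (-1:ℤ)^i * (n.choose (i+1) : ℤ) * F (i+1) := by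
    intro i
    rw [Nat.choose_succ_succ]
    push_cast
    ring
  have h2 : ∑ i ∈ Finset.range (n+1), (-1:ℤ)^i * (n.choose (i+1) : ℤ) * F (i+1)
      = ∑ i ∈ Finset.range n, (-1:ℤ)^i * (n.choose (i+1) : ℤ) * F (i+1) := by
    rw [Finset.sum_range_succ, Nat.choose_succ_self]
    simp
  have hA : ∑ ℓ ∈ Finset.range (n+1), (-1:ℤ)^ℓ * (n.choose ℓ : ℤ) * F ℓ
      = F 0 - ∑ i ∈ Finset.range (n+1), (-1:ℤ)^i * (n.choose (i+1) : ℤ) * F (i+1) := by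
    rw [h2, Finset.sum_range_succ' (fun ℓ => (-1:ℤ)^ℓ * (n.choose ℓ : ℤ) * F ℓ) n]
    have e : ∀ i : ℕ, (-1:ℤ)^(i+1) * (n.choose (i+1):ℤ) * F (i+1)
        = -((-1:ℤ)^i * (n.choose (i+1):ℤ) * F (i+1)) := fun i => by ring
    rw [Finset.sum_congr rfl (fun i _ => e i), Finset.sum_neg_distrib]
    simp
    ring
  rw [Finset.sum_range_succ' (fun ℓ => (-1:ℤ)^ℓ * ((n+1).choose ℓ : ℤ) * F ℓ) (n+1)]
  rw [Finset.sum_congr rfl (fun i _ => key i), Finset.sum_sub_distrib]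
  have hRHS : ∑ ℓ ∈ Finset.range (n+1), (-1:ℤ)^ℓ * (n.choose ℓ : ℤ) * (F ℓ - F (ℓ+1))
      = (∑ ℓ ∈ Finset.range (n+1), (-1:ℤ)^ℓ * (n.choose ℓ : ℤ) * F ℓ)
        - ∑ ℓ ∈ Finset.range (n+1), (-1:ℤ)^ℓ * (n.choose ℓ : ℤ) * F (ℓ+1) := by
    rw [← Finset.sum_sub_distrib]
    exact Finset.sum_congr rfl (fun ℓ _ => by ring)
  rw [hRHS, hA]
  have e0 : ((-1:ℤ)^0 * ((n+1).choose 0 : ℤ) * F 0) = F 0 := by simp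
  rw [Finset.sum_neg_distrib]
  simp only [pow_zero, Nat.choose_zero_right, Nat.cast_one, one_mul]
  ring

lemma main : ∀ n : ℕ, ∀ (j d : ℕ) (f : ℕ → ℤ), PolyDeg d f → 2*j + d + 1 ≤ n →
    ∑ ℓ ∈ Finset.range (n+1), (-1:ℤ)^ℓ * (n.choose ℓ : ℤ) * f ℓ * s j ℓ = 0 := by
  intro n
  induction n with
  | zero => intro j d f _ h; omega
  | succ n ih =>
    intro j d f hf hn
    have hstep : ∑ ℓ ∈ Finset.range (n+1+1), (-1:ℤ)^ℓ * ((n+1).choose ℓ : ℤ) * f ℓ * s j ℓ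
        = ∑ ℓ ∈ Finset.range (n+1), (-1:ℤ)^ℓ * (n.choose ℓ : ℤ)
            * (f ℓ * s j ℓ - f (ℓ+1) * s j (ℓ+1)) := by
      have := diff_sum n (fun ℓ => f ℓ * s j ℓ)
      simpa [mul_assoc] using this
    rw [hstep]
    rcases j with _ | k
    · rcases d with _ | e
      · apply Finset.sum_eq_zero
        intro ℓ _
        rw [s_zero, s_zero, hf ℓ, hf (ℓ+1)]
        ring
      · have hf' : PolyDeg e (fun x => f (x+1) - f x) := hf
        have hg : PolyDeg e (fun x => f x - f (x+1)) :=
          polydeg_congr e _ _ (fun x => by ring) (polydeg_neg e _ hf')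
        have h0 := ih 0 e (fun x => f x - f (x+1)) hg (by omega)
        rw [← h0]
        apply Finset.sum_congr rfl
        intro ℓ _
        rw [s_zero, s_zero]
        ring
    · have h2 : PolyDeg (d+1) (fun x => -((x:ℤ) * f (x+1))) :=
        polydeg_neg _ _ (polydeg_mul_id d _ (polydeg_shift d f hf))
      have S2 : ∑ ℓ ∈ Finset.range (n+1),
          (-1:ℤ)^ℓ * (n.choose ℓ:ℤ) * (-((ℓ:ℤ) * f (ℓ+1))) * s k ℓ = 0 :=
        ih k (d+1) _ h2 (by omega)
      have S1 : ∑ ℓ ∈ Finset.range (n+1),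
          (-1:ℤ)^ℓ * (n.choose ℓ:ℤ) * (f ℓ - f (ℓ+1)) * s (k+1) ℓ = 0 := by
        rcases d with _ | e
        · apply Finset.sum_eq_zero; intro ℓ _; rw [hf ℓ, hf (ℓ+1)]; ring
        · have hf' : PolyDeg e (fun x => f (x+1) - f x) := hf
          exact ih (k+1) e (fun x => f x - f (x+1))
            (polydeg_congr e _ _ (fun x => by ring) (polydeg_neg e _ hf')) (by omega)
      calc ∑ ℓ ∈ Finset.range (n+1), (-1:ℤ)^ℓ * (n.choose ℓ : ℤ)
              * (f ℓ * s (k+1) ℓ - f (ℓ+1) * s (k+1) (ℓ+1))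
          = ∑ ℓ ∈ Finset.range (n+1),
              ((-1:ℤ)^ℓ * (n.choose ℓ:ℤ) * (f ℓ - f (ℓ+1)) * s (k+1) ℓ
               + (-1:ℤ)^ℓ * (n.choose ℓ:ℤ) * (-((ℓ:ℤ) * f (ℓ+1))) * s k ℓ) := by
            refine Finset.sum_congr rfl (fun ℓ _ => ?_)
            rw [s_succ]
            ring
        _ = 0 := by rw [Finset.sum_add_distrib, S1, S2]; ring

theorem stmt2 (m j : ℕ) (hjm : j ≤ m) :
    ∑ ℓ ∈ Finset.Icc j (2 * m + 1),
      (-1 : ℤ) ^ ℓ * (Nat.choose (2 * m + 1) ℓ : ℤ) * (stirling1 ℓ (ℓ - j) : ℤ) = 0 := by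
  have h : ∑ ℓ ∈ Finset.range (2*m+1+1),
      (-1:ℤ)^ℓ * ((2*m+1).choose ℓ : ℤ) * s j ℓ = 0 := by
    have := main (2*m+1) j 0 (fun _ => (1:ℤ)) (polydeg_const 0 1) (by omega)
    simpa using this
  have e1 : ∑ ℓ ∈ Finset.Icc j (2*m+1),
      (-1 : ℤ) ^ ℓ * ((2 * m + 1).choose ℓ : ℤ) * (stirling1 ℓ (ℓ - j) : ℤ)
      = ∑ ℓ ∈ Finset.Icc j (2*m+1), (-1:ℤ)^ℓ * ((2*m+1).choose ℓ : ℤ) * s j ℓ := by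
    refine Finset.sum_congr rfl (fun ℓ hℓ => ?_)
    have hj : j ≤ ℓ := (Finset.mem_Icc.mp hℓ).1
    rw [s, if_pos hj]
  rw [e1, Finset.sum_subset, h]
  · intro x hx
    simp only [Finset.mem_Icc, Finset.mem_range] at *
    omega
  · intro x hx hnx
    have hxj : ¬ j ≤ x := by
      simp only [Finset.mem_Icc, Finset.mem_range] at *
      omega
    rw [s, if_neg hxj, mul_zero]
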